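/- Let K be a field of characteristic zero and let φ be the K-algebra endomorphism of K[x,y] given by φ(x) = f = x + y·h₁(x,y) and φ(y) = g = y·h₂(x,y), where h₁, h₂ ∈ K[x,y] and h₂ ≠ 0. Suppose that for every coordinate p of K[x,y], the subalgebra K[φ(p)] is a proper retract of K[x,y]. Then for every positive integer n there exist s_n(z), t_n(z) ∈ K[z] with deg(s_n) ≥ 1, deg(t_n) ≥ 1 and deg(s_n) > n·deg(t_n), such that the K-subalgebra of K[z] generated by f(s_n(z), t_n(z)) and g(s_n(z), t_n(z)) is all of K[z]. -/

import Mathlib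

open MvPolynomial

noncomputable section

/-- The polynomial ring `K[x,y]`, with `x = X 0` and `y = X 1`. -/
abbrev P2 (K : Type*) [Field K] := MvPolynomial (Fin 2) K

/-- A subalgebra `R` of `K[x,y]` is a retract if it is the image of an idempotent
`K`-algebra endomorphism of `K[x,y]`. -/
def IsRetract (K : Type*) [Field K] (R : Subalgebra K (P2 K)) : Prop :=
  ∃ π : P2 K →ₐ[K] P2 K, π.comp π = π ∧ π.range = R

/-- A proper retract is a retract different from `K` (the bottom subalgebra) and
from `K[x,y]` itself. -/
def IsProperRetract (K : Type*) [Field K] (R : Subalgebra K (P2 K)) : Prop :=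
  IsRetract K R ∧ R ≠ ⊥ ∧ R ≠ ⊤

/-- `p` is a coordinate of `K[x,y]` if some `K`-algebra automorphism sends `x` to `p`. -/
def IsCoordinate (K : Type*) [Field K] (p : P2 K) : Prop :=
  ∃ σ : P2 K ≃ₐ[K] P2 K, σ (X 0) = p

lemma natDegree_aeval_pair_le {K : Type*} [Field K] (h : P2 K) (P Q : Polynomial K) :
    ((MvPolynomial.aeval ![P, Q]) h).natDegree ≤ h.totalDegree * max P.natDegree Q.natDegree := by
  classical
  rw [MvPolynomial.aeval_def, MvPolynomial.eval₂_eq' (algebraMap K (Polynomial K)) ![P,Q] h]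
  refine le_trans (Polynomial.natDegree_sum_le _ _) ?_
  rw [Finset.fold_max_le]
  refine ⟨Nat.zero_le _, ?_⟩
  intro d hd
  show ((algebraMap K (Polynomial K) (MvPolynomial.coeff d h) *
      ∏ i, (![P, Q] i) ^ d i).natDegree ≤ _)
  have hterm : (algebraMap K (Polynomial K) (MvPolynomial.coeff d h) *
      ∏ i, (![P, Q] i) ^ d i).natDegree ≤ d 0 * P.natDegree + d 1 * Q.natDegree := by
    refine le_trans (Polynomial.natDegree_mul_le) ?_
    rw [Fin.prod_univ_two]
    simp only [Matrix.cons_val_zero, Matrix.cons_val_one, Matrix.head_cons]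
    have h0 : (algebraMap K (Polynomial K) (MvPolynomial.coeff d h)).natDegree = 0 := by
      simp [Polynomial.algebraMap_eq]
    rw [h0, zero_add]
    refine le_trans (Polynomial.natDegree_mul_le) ?_
    exact add_le_add (Polynomial.natDegree_pow_le) (Polynomial.natDegree_pow_le)
  refine le_trans hterm ?_
  have hsum : d 0 + d 1 ≤ h.totalDegree := by
    have := MvPolynomial.le_totalDegree hd
    rwa [Finsupp.sum_fintype _ _ (fun _ => rfl), Fin.sum_univ_two] at this
  calc d 0 * P.natDegree + d 1 * Q.natDegree
      ≤ d 0 * max P.natDegree Q.natDegree + d 1 * max P.natDegree Q.natDegree := by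
        gcongr <;> simp [le_max_left, le_max_right]
    _ = (d 0 + d 1) * max P.natDegree Q.natDegree := by ring
    _ ≤ h.totalDegree * max P.natDegree Q.natDegree := by gcongr

lemma aeval_injective_of_notbot {K : Type*} [Field K] [CharZero K] {w : P2 K}
    (hw : w ∉ (⊥ : Subalgebra K (P2 K))) :
    Function.Injective (Polynomial.aeval w : Polynomial K →ₐ[K] P2 K) := by
  rw [injective_iff_map_eq_zero]
  intro r hr
  by_contra hrne
  have hroot : ∀ v : Fin 2 → K, MvPolynomial.eval v w ∈ r.roots := by
    intro v
    rw [Polynomial.mem_roots']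
    refine ⟨hrne, ?_⟩
    have hc := congrArg (MvPolynomial.eval v) hr
    rw [map_zero] at hc
    have hcomm : MvPolynomial.eval v (Polynomial.aeval w r)
        = Polynomial.eval (MvPolynomial.eval v w) r := by
      rw [Polynomial.aeval_def, Polynomial.hom_eval₂]
      have h1 : (MvPolynomial.eval v).comp (algebraMap K (P2 K)) = RingHom.id K := by
        ext c; simp
      rw [h1]
      rfl
    rw [hcomm] at hc
    exact hc
  classical
  have hgzero : ∀ v : Fin 2 → K,
      MvPolynomial.eval v (∏ ρ ∈ r.roots.toFinset, (w - MvPolynomial.C ρ)) = 0 := by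
    intro v
    rw [map_prod]
    refine Finset.prod_eq_zero (Multiset.mem_toFinset.mpr (hroot v)) ?_
    simp
  have hzero : (∏ ρ ∈ r.roots.toFinset, (w - MvPolynomial.C ρ)) = 0 := by
    apply MvPolynomial.funext
    intro v
    rw [hgzero v, map_zero]
  obtain ⟨ρ, -, hρ⟩ := Finset.prod_eq_zero_iff.mp hzero
  apply hw
  rw [sub_eq_zero] at hρ
  rw [hρ, Algebra.mem_bot]
  exact ⟨ρ, rfl⟩

lemma coordinate_aux {K : Type*} [Field K] (m : ℕ) :
    IsCoordinate K (X 1 + (X 0 + X 1 ^ m) ^ 2) := by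
  let σf : P2 K →ₐ[K] P2 K := MvPolynomial.aeval ![X 1 + (X 0 + X 1 ^ m) ^ 2, X 0 + X 1 ^ m]
  let τf : P2 K →ₐ[K] P2 K := MvPolynomial.aeval ![X 1 - (X 0 - X 1 ^ 2) ^ m, X 0 - X 1 ^ 2]
  have e0 : ∀ i : Fin 2, (σf.comp τf) (X i) = (AlgHom.id K (P2 K)) (X i) := by
    intro i
    fin_cases i
    · show σf (τf (X 0)) = X 0
      have hτ : τf (X 0) = X 1 - (X 0 - X 1 ^ 2) ^ m := by simp [τf]
      rw [hτ, map_sub, map_pow, map_sub, map_pow]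
      have h0 : σf (X 0) = X 1 + (X 0 + X 1 ^ m) ^ 2 := by simp [σf]
      have h1 : σf (X 1) = X 0 + X 1 ^ m := by simp [σf]
      rw [h0, h1]; ring
    · show σf (τf (X 1)) = X 1
      have hτ : τf (X 1) = X 0 - X 1 ^ 2 := by simp [τf]
      rw [hτ, map_sub, map_pow]
      have h0 : σf (X 0) = X 1 + (X 0 + X 1 ^ m) ^ 2 := by simp [σf]
      have h1 : σf (X 1) = X 0 + X 1 ^ m := by simp [σf]
      rw [h0, h1]; ring
  have e1 : ∀ i : Fin 2, (τf.comp σf) (X i) = (AlgHom.id K (P2 K)) (X i) := by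
    intro i
    fin_cases i
    · show τf (σf (X 0)) = X 0
      have hσ : σf (X 0) = X 1 + (X 0 + X 1 ^ m) ^ 2 := by simp [σf]
      rw [hσ, map_add, map_pow, map_add, map_pow]
      have h0 : τf (X 0) = X 1 - (X 0 - X 1 ^ 2) ^ m := by simp [τf]
      have h1 : τf (X 1) = X 0 - X 1 ^ 2 := by simp [τf]
      rw [h0, h1]; ring
    · show τf (σf (X 1)) = X 1
      have hσ : σf (X 1) = X 0 + X 1 ^ m := by simp [σf]
      rw [hσ, map_add, map_pow]
      have h0 : τf (X 0) = X 1 - (X 0 - X 1 ^ 2) ^ m := by simp [τf]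
      have h1 : τf (X 1) = X 0 - X 1 ^ 2 := by simp [τf]
      rw [h0, h1]; ring
  refine ⟨AlgEquiv.ofAlgHom σf τf (MvPolynomial.algHom_ext e0) (MvPolynomial.algHom_ext e1), ?_⟩
  show σf (X 0) = _
  simp [σf]

/-- **Lemma 2.** Let `φ = (x + y·h₁, y·h₂)` with `h₂ ≠ 0` be an endomorphism of `K[x,y]`
mapping each coordinate to a generator of a proper retract. Then for every `n ≥ 1` there
are `sₙ, tₙ ∈ K[z]` with `deg sₙ ≥ 1`, `deg tₙ ≥ 1` and `deg sₙ > n · deg tₙ` such that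
`K[f(sₙ,tₙ), g(sₙ,tₙ)] = K[z]`. -/
theorem lemma2 {K : Type*} [Field K] [CharZero K]
    (h₁ h₂ : P2 K) (hh₂ : h₂ ≠ 0)
    (φ : P2 K →ₐ[K] P2 K)
    (hφx : φ (X 0) = X 0 + X 1 * h₁)
    (hφy : φ (X 1) = X 1 * h₂)
    (h : ∀ p : P2 K, IsCoordinate K p →
      IsProperRetract K (Algebra.adjoin K {φ p})) :
    ∀ n : ℕ, 0 < n → ∃ s t : Polynomial K,
      1 ≤ s.natDegree ∧ 1 ≤ t.natDegree ∧ n * t.natDegree < s.natDegree ∧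
      Algebra.adjoin K
        {(MvPolynomial.aeval ![s, t] : P2 K →ₐ[K] Polynomial K) (φ (X 0)),
         (MvPolynomial.aeval ![s, t] : P2 K →ₐ[K] Polynomial K) (φ (X 1))} = ⊤ := by
  intro n hn
  classical
  set d₁ : ℕ := h₁.totalDegree with hd₁def
  set m : ℕ := (d₁ + 1) * (n + 1) + 1 with hmdef
  have hm1 : 1 ≤ m := by omega
  have hexp : (d₁ + 1) * (n + 1) = (d₁ + 1) * n + (d₁ + 1) := by ring
  have hmgt : (d₁ + 1) * n < m := by omega
  have hmgt2 : d₁ + 1 < m := by omega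
  -- total degree bound for f := φ (X 0)
  have hdf : (X 0 + X 1 * h₁ : P2 K).totalDegree ≤ d₁ + 1 := by
    refine le_trans (MvPolynomial.totalDegree_add _ _) ?_
    have hX0 : (X 0 : P2 K).totalDegree = 1 := MvPolynomial.totalDegree_X 0
    have hX1h : (X 1 * h₁ : P2 K).totalDegree ≤ 1 + d₁ := by
      refine le_trans (MvPolynomial.totalDegree_mul _ _) ?_
      rw [MvPolynomial.totalDegree_X]
    omega
  -- the coordinate
  set p : P2 K := X 1 + (X 0 + X 1 ^ m) ^ 2 with hpdef
  obtain ⟨⟨π, hππ, hrange⟩, hbot, -⟩ := h p (coordinate_aux m)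
  set w : P2 K := φ p with hwdef
  have hwval : w = φ (X 1) + (φ (X 0) + φ (X 1) ^ m) ^ 2 := by
    rw [hwdef, hpdef, map_add, map_pow, map_add, map_pow]
  -- w is not constant
  have hwnb : w ∉ (⊥ : Subalgebra K (P2 K)) := by
    intro hmem
    apply hbot
    refine le_antisymm ?_ bot_le
    exact Algebra.adjoin_le (Set.singleton_subset_iff.mpr hmem)
  -- extract P, Q
  have hx0 : π (X 0) ∈ Algebra.adjoin K {w} := hrange ▸ ⟨X 0, rfl⟩
  have hx1 : π (X 1) ∈ Algebra.adjoin K {w} := hrange ▸ ⟨X 1, rfl⟩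
  rw [Algebra.adjoin_singleton_eq_range_aeval] at hx0 hx1
  obtain ⟨P, hP0⟩ := hx0
  obtain ⟨Q, hQ0'⟩ := hx1
  have hP : Polynomial.aeval w P = π (X 0) := hP0
  have hQ : Polynomial.aeval w Q = π (X 1) := hQ0'
  -- π fixes w
  have hwmem : w ∈ π.range := by
    rw [hrange]; exact Algebra.subset_adjoin rfl
  obtain ⟨e, he⟩ := hwmem
  have he' : π e = w := he
  have hπw : π w = w := by
    have h1 : π (π e) = π e := by rw [← AlgHom.comp_apply, hππ]
    rwa [he'] at h1
  -- π as an aeval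
  have hπeq : π = MvPolynomial.aeval ![π (X 0), π (X 1)] := by
    apply MvPolynomial.algHom_ext
    intro i
    fin_cases i
    · show π (X 0) = MvPolynomial.aeval ![π (X 0), π (X 1)] (X 0)
      simp
    · show π (X 1) = MvPolynomial.aeval ![π (X 0), π (X 1)] (X 1)
      simp
  -- composition identity
  have hcomp : (Polynomial.aeval w).comp
      (MvPolynomial.aeval ![P, Q] : P2 K →ₐ[K] Polynomial K)
      = MvPolynomial.aeval ![Polynomial.aeval w P, Polynomial.aeval w Q] := by
    apply MvPolynomial.algHom_ext
    intro i
    fin_cases i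
    · show Polynomial.aeval w ((MvPolynomial.aeval ![P, Q] : P2 K →ₐ[K] Polynomial K) (X 0)) = _
      simp
    · show Polynomial.aeval w ((MvPolynomial.aeval ![P, Q] : P2 K →ₐ[K] Polynomial K) (X 1)) = _
      simp
  have hkey : Polynomial.aeval w ((MvPolynomial.aeval ![P, Q] : P2 K →ₐ[K] Polynomial K) w)
      = Polynomial.aeval w (Polynomial.X : Polynomial K) := by
    rw [Polynomial.aeval_X, ← AlgHom.comp_apply, hcomp, hP, hQ, ← hπeq, hπw]
  have hwX : (MvPolynomial.aeval ![P, Q] : P2 K →ₐ[K] Polynomial K) w = Polynomial.X :=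
    aeval_injective_of_notbot hwnb hkey
  -- the univariate identity
  set F : Polynomial K := (MvPolynomial.aeval ![P, Q] : P2 K →ₐ[K] Polynomial K) (φ (X 0)) with hFdef
  set G : Polynomial K := (MvPolynomial.aeval ![P, Q] : P2 K →ₐ[K] Polynomial K) (φ (X 1)) with hGdef
  have hI : G + (F + G ^ m) ^ 2 = Polynomial.X := by
    rw [← hwX, hwval, map_add, map_pow, map_add, map_pow]
  -- decompositions
  have hF : F = P + Q * (MvPolynomial.aeval ![P, Q] : P2 K →ₐ[K] Polynomial K) h₁ := by
    rw [hFdef, hφx, map_add, map_mul]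
    simp
  have hG : G = Q * (MvPolynomial.aeval ![P, Q] : P2 K →ₐ[K] Polynomial K) h₂ := by
    rw [hGdef, hφy, map_mul]
    simp
  -- degree bound for F
  have hFbound : F.natDegree ≤ (d₁ + 1) * max P.natDegree Q.natDegree := by
    rw [hFdef, hφx]
    refine le_trans (natDegree_aeval_pair_le _ _ _) ?_
    exact Nat.mul_le_mul_right _ hdf
  -- Case: Q has degree 0 is impossible
  have hb : Q.natDegree ≠ 0 := by
    intro hb0
    obtain ⟨t₀, ht₀⟩ : ∃ c, Q = Polynomial.C c :=
      ⟨Q.coeff 0, Polynomial.eq_C_of_natDegree_eq_zero hb0⟩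
    -- decompose through aeval P
    have hdec : (MvPolynomial.aeval ![P, Q] : P2 K →ₐ[K] Polynomial K) =
        (Polynomial.aeval P).comp
          (MvPolynomial.aeval ![Polynomial.X, Polynomial.C t₀] : P2 K →ₐ[K] Polynomial K) := by
      apply MvPolynomial.algHom_ext
      intro i
      fin_cases i
      · show (MvPolynomial.aeval ![P, Q] : P2 K →ₐ[K] Polynomial K) (X 0) = Polynomial.aeval P
          ((MvPolynomial.aeval ![Polynomial.X, Polynomial.C t₀] : P2 K →ₐ[K] Polynomial K) (X 0))
        simp
      · show (MvPolynomial.aeval ![P, Q] : P2 K →ₐ[K] Polynomial K) (X 1) = Polynomial.aeval P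
          ((MvPolynomial.aeval ![Polynomial.X, Polynomial.C t₀] : P2 K →ₐ[K] Polynomial K) (X 1))
        simp [ht₀]
    set Fh : Polynomial K := (MvPolynomial.aeval ![Polynomial.X, Polynomial.C t₀] : P2 K →ₐ[K] Polynomial K) (φ (X 0))
      with hFhdef
    set Gh : Polynomial K := (MvPolynomial.aeval ![Polynomial.X, Polynomial.C t₀] : P2 K →ₐ[K] Polynomial K) (φ (X 1))
      with hGhdef
    set Wh : Polynomial K := Gh + (Fh + Gh ^ m) ^ 2 with hWhdef
    have hWP : Polynomial.aeval P Wh = Polynomial.X := by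
      rw [hWhdef, map_add, map_pow, map_add, map_pow, ← hI]
      rw [hFdef, hGdef, hdec]
      simp
      rfl
    -- convert to comp
    have hWPcomp : Wh.comp P = Polynomial.X := by
      rw [← hWP, Polynomial.aeval_def, Polynomial.comp, Polynomial.algebraMap_eq]
    have hdegs : Wh.natDegree * P.natDegree = 1 := by
      have := congrArg Polynomial.natDegree hWPcomp
      rwa [Polynomial.natDegree_comp, Polynomial.natDegree_X] at this
    have hWh1 : Wh.natDegree = 1 := Nat.dvd_one.mp ⟨P.natDegree, hdegs.symm⟩
    -- now show Wh.natDegree ≠ 1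
    have hFhbound : Fh.natDegree ≤ d₁ + 1 := by
      rw [hFhdef, hφx]
      refine le_trans (natDegree_aeval_pair_le _ _ _) ?_
      have : max (Polynomial.X : Polynomial K).natDegree (Polynomial.C t₀).natDegree = 1 := by
        simp
      rw [this, mul_one]
      exact hdf
    rcases Nat.eq_zero_or_pos Gh.natDegree with hγ | hγ
    · -- Gh constant
      rcases Nat.eq_zero_or_pos (Fh + Gh ^ m).natDegree with hk | hk
      · have : Wh.natDegree ≤ 0 := by
          refine le_trans (Polynomial.natDegree_add_le _ _) ?_
          rw [Polynomial.natDegree_pow, hk, hγ]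
          simp
        omega
      · have h2 : ((Fh + Gh ^ m) ^ 2).natDegree = 2 * (Fh + Gh ^ m).natDegree :=
          Polynomial.natDegree_pow _ _
        have : Wh.natDegree = 2 * (Fh + Gh ^ m).natDegree := by
          rw [hWhdef]
          rw [Polynomial.natDegree_add_eq_right_of_natDegree_lt (by omega), h2]
        omega
    · -- Gh nonconstant
      have hGhm : (Gh ^ m).natDegree = m * Gh.natDegree := Polynomial.natDegree_pow _ _
      have hlt : Fh.natDegree < (Gh ^ m).natDegree := by
        rw [hGhm]
        calc Fh.natDegree ≤ d₁ + 1 := hFhbound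
          _ < m := hmgt2
          _ ≤ m * Gh.natDegree := Nat.le_mul_of_pos_right m hγ
      have hU : (Fh + Gh ^ m).natDegree = m * Gh.natDegree := by
        rw [Polynomial.natDegree_add_eq_right_of_natDegree_lt hlt, hGhm]
      have hU2 : ((Fh + Gh ^ m) ^ 2).natDegree = 2 * (m * Gh.natDegree) := by
        rw [Polynomial.natDegree_pow, hU]
      have hWdeg : Wh.natDegree = 2 * (m * Gh.natDegree) := by
        rw [hWhdef]
        have hle : Gh.natDegree ≤ m * Gh.natDegree := Nat.le_mul_of_pos_left _ (by omega)
        rw [Polynomial.natDegree_add_eq_right_of_natDegree_lt (by omega), hU2]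
      have hpos : 1 ≤ m * Gh.natDegree := Nat.one_le_iff_ne_zero.mpr (by positivity)
      omega
  -- main degree estimate
  have hQ0 : Q ≠ 0 := by
    intro h0
    exact hb (by rw [h0]; simp)
  have HA : n * Q.natDegree < P.natDegree := by
    by_contra hcon
    push_neg at hcon
    set A : Polynomial K := (MvPolynomial.aeval ![P, Q] : P2 K →ₐ[K] Polynomial K) h₁ with hAdef
    set B : Polynomial K := (MvPolynomial.aeval ![P, Q] : P2 K →ₐ[K] Polynomial K) h₂ with hBdef
    have hBne : B ≠ 0 := by
      intro h0
      have hG0 : G = 0 := by rw [hG, h0, mul_zero]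
      rw [hG0] at hI
      have hzp : (0 : Polynomial K) ^ m = 0 := zero_pow (by omega)
      rw [hzp, add_zero, zero_add] at hI
      have := congrArg Polynomial.natDegree hI
      rw [Polynomial.natDegree_pow, Polynomial.natDegree_X] at this
      omega
    have hmax : max P.natDegree Q.natDegree ≤ n * Q.natDegree := by
      refine max_le hcon ?_
      calc Q.natDegree = 1 * Q.natDegree := (one_mul _).symm
        _ ≤ n * Q.natDegree := Nat.mul_le_mul_right _ hn
    have hGdeg : G.natDegree = Q.natDegree + B.natDegree := by
      rw [hG]
      exact Polynomial.natDegree_mul hQ0 hBne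
    have hG1 : 1 ≤ G.natDegree := by omega
    have hFlt : F.natDegree < (G ^ m).natDegree := by
      rw [Polynomial.natDegree_pow]
      calc F.natDegree ≤ (d₁ + 1) * max P.natDegree Q.natDegree := hFbound
        _ ≤ (d₁ + 1) * (n * Q.natDegree) := Nat.mul_le_mul_left _ hmax
        _ = ((d₁ + 1) * n) * Q.natDegree := by ring
        _ < m * Q.natDegree := by
            have hQpos : 0 < Q.natDegree := by omega
            exact (Nat.mul_lt_mul_right hQpos).mpr hmgt
        _ ≤ m * G.natDegree := Nat.mul_le_mul_left _ (by omega)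
    have hU : (F + G ^ m).natDegree = m * G.natDegree := by
      rw [Polynomial.natDegree_add_eq_right_of_natDegree_lt hFlt, Polynomial.natDegree_pow]
    have hU2 : ((F + G ^ m) ^ 2).natDegree = 2 * (m * G.natDegree) := by
      rw [Polynomial.natDegree_pow, hU]
    have hGlt : G.natDegree < ((F + G ^ m) ^ 2).natDegree := by
      rw [hU2]
      have hle : G.natDegree ≤ m * G.natDegree := Nat.le_mul_of_pos_left _ (by omega)
      omega
    have hfin := congrArg Polynomial.natDegree hI
    rw [Polynomial.natDegree_add_eq_right_of_natDegree_lt hGlt, hU2,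
      Polynomial.natDegree_X] at hfin
    have hpos : 1 ≤ m * G.natDegree := Nat.one_le_iff_ne_zero.mpr (by positivity)
    omega
  -- assemble
  refine ⟨P, Q, ?_, ?_, HA, ?_⟩
  · have h1 : 1 ≤ Q.natDegree := by omega
    have h2 : 1 ≤ n * Q.natDegree := Nat.one_le_iff_ne_zero.mpr (by positivity)
    omega
  · omega
  · -- adjoin is everything
    have hmem : Polynomial.X ∈ Algebra.adjoin K ({F, G} : Set (Polynomial K)) := by
      rw [← hI]
      have hFm : F ∈ Algebra.adjoin K ({F, G} : Set (Polynomial K)) :=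
        Algebra.subset_adjoin (by simp)
      have hGm : G ∈ Algebra.adjoin K ({F, G} : Set (Polynomial K)) :=
        Algebra.subset_adjoin (by simp)
      exact Subalgebra.add_mem _ hGm (Subalgebra.pow_mem _
        (Subalgebra.add_mem _ hFm (Subalgebra.pow_mem _ hGm m)) 2)
    rw [eq_top_iff, ← Polynomial.adjoin_X]
    exact Algebra.adjoin_le (by simpa using hmem)
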